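/- Let $A_1, A_2, A_3$ be three non-collinear points in $\mathbb{R}^2$ with positive weights $w_1, w_2, w_3$. If $\|w_2 u(A_1, A_2) + w_3 u(A_1, A_3)\| \le w_1$, then $A_1$ minimizes $f(P) = \sum_{i=1}^3 w_i \|P - A_i\|$ over all $P \in \mathbb{R}^2$ (the absorbed case). -/

import Mathlib

open Real EuclideanGeometry

noncomputable def u (X Y : EuclideanSpace ℝ (Fin 2)) : EuclideanSpace ℝ (Fin 2) :=
  ‖Y - X‖⁻¹ • (Y - X)

lemma u_inner_self (X Y : EuclideanSpace ℝ (Fin 2)) :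
    inner ℝ (u X Y) (Y - X) = ‖Y - X‖ := by
  by_cases h : Y - X = 0
  · simp [u, h]
  · have hn : ‖Y - X‖ ≠ 0 := norm_ne_zero_iff.mpr h
    rw [u, inner_smul_left, real_inner_self_eq_norm_sq]
    field_simp
    simp [hn]

lemma u_norm_le (X Y : EuclideanSpace ℝ (Fin 2)) : ‖u X Y‖ ≤ 1 := by
  by_cases h : Y - X = 0
  · simp [u, h]
  · have hn : ‖Y - X‖ ≠ 0 := norm_ne_zero_iff.mpr h
    rw [u, norm_smul]
    simp [abs_of_nonneg (inv_nonneg.mpr (norm_nonneg _)), inv_mul_cancel₀ hn]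

lemma u_inner_le (X Y z : EuclideanSpace ℝ (Fin 2)) : inner ℝ (u X Y) z ≤ ‖z‖ := by
  calc (inner ℝ (u X Y) z : ℝ) ≤ ‖u X Y‖ * ‖z‖ := real_inner_le_norm _ _
    _ ≤ 1 * ‖z‖ := by
        exact mul_le_mul_of_nonneg_right (u_norm_le X Y) (norm_nonneg _)
    _ = ‖z‖ := one_mul _

theorem absorbed_case_minimizes
    (A₁ A₂ A₃ : EuclideanSpace ℝ (Fin 2)) (w₁ w₂ w₃ : ℝ)
    (hw₁ : 0 < w₁) (hw₂ : 0 < w₂) (hw₃ : 0 < w₃)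
    (hnc : ¬ Collinear ℝ ({A₁, A₂, A₃} : Set (EuclideanSpace ℝ (Fin 2))))
    (habs : ‖w₂ • u A₁ A₂ + w₃ • u A₁ A₃‖ ≤ w₁) :
    ∀ P : EuclideanSpace ℝ (Fin 2),
      w₁ * ‖A₁ - A₁‖ + w₂ * ‖A₁ - A₂‖ + w₃ * ‖A₁ - A₃‖ ≤
      w₁ * ‖P - A₁‖ + w₂ * ‖P - A₂‖ + w₃ * ‖P - A₃‖ := by
  intro P
  set v : EuclideanSpace ℝ (Fin 2) := w₂ • u A₁ A₂ + w₃ • u A₁ A₃ with hv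
  have key : ∀ Y : EuclideanSpace ℝ (Fin 2),
      ‖A₁ - Y‖ ≤ ‖P - Y‖ + inner ℝ (u A₁ Y) (P - A₁) := by
    intro Y
    have h1 : (‖Y - A₁‖ : ℝ) = inner ℝ (u A₁ Y) (Y - P) + inner ℝ (u A₁ Y) (P - A₁) := by
      rw [← inner_add_right]
      have : Y - P + (P - A₁) = Y - A₁ := by abel
      rw [this, u_inner_self]
    have h2 : (inner ℝ (u A₁ Y) (Y - P) : ℝ) ≤ ‖Y - P‖ := u_inner_le _ _ _
    rw [norm_sub_rev A₁ Y, norm_sub_rev P Y]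
    linarith
  have h2 := key A₂
  have h3 := key A₃
  have hvle : (inner ℝ v (P - A₁) : ℝ) ≤ w₁ * ‖P - A₁‖ := by
    calc (inner ℝ v (P - A₁) : ℝ) ≤ ‖v‖ * ‖P - A₁‖ := real_inner_le_norm _ _
      _ ≤ w₁ * ‖P - A₁‖ := mul_le_mul_of_nonneg_right habs (norm_nonneg _)
  have hvinner : (inner ℝ v (P - A₁) : ℝ) =
      w₂ * inner ℝ (u A₁ A₂) (P - A₁) + w₃ * inner ℝ (u A₁ A₃) (P - A₁) := by
    rw [hv, inner_add_left, real_inner_smul_left, real_inner_smul_left]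
  simp only [sub_self, norm_zero, mul_zero, zero_add]
  nlinarith [mul_le_mul_of_nonneg_left h2 hw₂.le, mul_le_mul_of_nonneg_left h3 hw₃.le]
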